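/- Let π : E → G be a surjective group homomorphism with kernel A, and let f be a group automorphism of E with f(A) = A. Let f₁ be the induced automorphism of G (so f₁∘π = π∘f) and f₂ the restriction of f to A. Then there exists a dynamical 2-cocycle α on the generalized Alexander quandle Alex_{f₁}(G) with values in the set A such that α_{1,1}(s,t) = f₂(s·t⁻¹)·t for all s,t ∈ A, together with a bijection Ψ : E → G×A satisfying Ψ(f(a·b⁻¹)·b) = Ψ(a) * Ψ(b) for all a,b ∈ E, where * is the operation of the extension quandle Alex_{f₁}(G) ×_α A; that is, Alex_f(E) is isomorphic as a quandle to Alex_{f₁}(G) ×_α A, and on the fiber {1}×A the induced quandle operation is that of Alex_{f₂}(A). -/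

import Mathlib

/-- A dynamical 2-cocycle on a quandle `(X, op)` with values in a set `S`. -/
def IsDynCocycle {X S : Type*} (op : X → X → X) (α : X → X → S → S → S) : Prop :=
  (∀ (x : X) (s : S), α x x s s = s) ∧
  (∀ (x y : X) (t : S), Function.Bijective (fun s => α x y s t)) ∧
  (∀ (x y z : X) (s t u : S),
    α (op x y) z (α x y s t) u = α (op x z) (op y z) (α x z s u) (α y z t u))

section Stmt17Aux

variable {E G : Type*} [Group E] [Group G]

/-- k(e) = e · σ(π e)⁻¹ lands in the kernel. -/
noncomputable def kmap (π : E →* G) (σ : G → E) (hσ : ∀ x, π (σ x) = x) (e : E) : π.ker :=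
  ⟨e * (σ (π e))⁻¹, by simp [MonoidHom.mem_ker, hσ]⟩

lemma kmap_coe (π : E →* G) (σ : G → E) (hσ : ∀ x, π (σ x) = x) (e : E) :
    (kmap π σ hσ e : E) = e * (σ (π e))⁻¹ := rfl

lemma kmap_mul_sec (π : E →* G) (σ : G → E) (hσ : ∀ x, π (σ x) = x) (e : E) :
    (kmap π σ hσ e : E) * σ (π e) = e := by
  simp [kmap_coe]

lemma pi_mem_mul_sec (π : E →* G) (σ : G → E) (hσ : ∀ x, π (σ x) = x)
    (s : π.ker) (x : G) : π ((s : E) * σ x) = x := by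
  simp [map_mul, hσ, MonoidHom.mem_ker.mp s.2]

lemma kmap_section (π : E →* G) (σ : G → E) (hσ : ∀ x, π (σ x) = x)
    (s : π.ker) (x : G) : kmap π σ hσ ((s : E) * σ x) = s := by
  ext
  rw [kmap_coe, pi_mem_mul_sec π σ hσ]
  group

lemma kmap_coe' (π : E →* G) (σ : G → E) (hσ : ∀ x, π (σ x) = x)
    {e : E} {z : G} (h : π e = z) : (kmap π σ hσ e : E) = e * (σ z)⁻¹ := by
  rw [kmap_coe, h]

end Stmt17Aux

theorem stmt17 {E G : Type*} [Group E] [Group G]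
    (π : E →* G) (hπ : Function.Surjective π)
    (f : E ≃* E) (hfA : ∀ a : E, a ∈ π.ker ↔ f a ∈ π.ker)
    (f₁ : G ≃* G) (hf₁ : ∀ a : E, f₁ (π a) = π (f a))
    (f₂ : π.ker → π.ker) (hf₂ : ∀ s : π.ker, (f₂ s : E) = f (s : E)) :
    ∃ α : G → G → π.ker → π.ker → π.ker,
      -- α is a dynamical 2-cocycle on the quandle Alex_{f₁}(G)
      IsDynCocycle (fun x y : G => f₁ (x * y⁻¹) * y) α ∧
      -- on the fiber over 1 the induced operation is that of Alex_{f₂}(A)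
      (∀ s t : π.ker, α 1 1 s t = f₂ (s * t⁻¹) * t) ∧
      -- Alex_f(E) ≅ Alex_{f₁}(G) ×_α A
      ∃ Ψ : E → G × π.ker, Function.Bijective Ψ ∧
        ∀ a b : E,
          Ψ (f (a * b⁻¹) * b) =
            (f₁ ((Ψ a).1 * (Ψ b).1⁻¹) * (Ψ b).1,
              α (Ψ a).1 (Ψ b).1 (Ψ a).2 (Ψ b).2) := by
  classical
  obtain ⟨σ, hσ⟩ : ∃ σ : G → E, ∀ x, π (σ x) = x :=
    ⟨fun x => (hπ x).choose, fun x => (hπ x).choose_spec⟩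
  -- π of a quandle product
  have hπq : ∀ a b : E, π (f (a * b⁻¹) * b) = f₁ (π a * (π b)⁻¹) * π b := by
    intro a b
    rw [map_mul, ← hf₁, map_mul, map_inv]
  have hπsymm : ∀ e : E, π (f.symm e) = f₁.symm (π e) := by
    intro e
    have : f₁ (π (f.symm e)) = π e := by rw [hf₁, f.apply_symm_apply]
    exact f₁.injective (by rw [this, f₁.apply_symm_apply])
  set α : G → G → π.ker → π.ker → π.ker := fun x y s t =>
    kmap π σ hσ (f ((s : E) * σ x * ((t : E) * σ y)⁻¹) * ((t : E) * σ y)) with hα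
  -- key compatibility lemma
  have hkey : ∀ a b : E,
      α (π a) (π b) (kmap π σ hσ a) (kmap π σ hσ b) = kmap π σ hσ (f (a * b⁻¹) * b) := by
    intro a b
    rw [hα]
    simp only [kmap_mul_sec]
  -- fiber identity
  have hfiber : ∀ s t : π.ker, α 1 1 s t = f₂ (s * t⁻¹) * t := by
    intro s t
    have hst : ((s : E) * σ 1 * ((t : E) * σ 1)⁻¹) = (s : E) * (t : E)⁻¹ := by group
    have hmem : π (f ((s : E) * (t : E)⁻¹)) = 1 := by
      rw [← hf₁, map_mul, map_inv, MonoidHom.mem_ker.mp s.2, MonoidHom.mem_ker.mp t.2]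
      simp
    ext
    rw [hα]
    simp only [hst]
    have hπval : π (f ((s : E) * (t : E)⁻¹) * ((t : E) * σ 1)) = 1 := by
      rw [map_mul, hmem, one_mul, map_mul, MonoidHom.mem_ker.mp t.2, one_mul, hσ]
    rw [kmap_coe' π σ hσ hπval]
    have : ((f₂ (s * t⁻¹) * t : π.ker) : E) = f ((s : E) * (t : E)⁻¹) * (t : E) := by
      push_cast [hf₂]
      norm_num
    rw [this]
    group
  refine ⟨α, ⟨?_, ?_, ?_⟩, hfiber, ?_⟩
  · -- idempotence
    intro x s
    rw [hα]
    simp only [mul_inv_cancel, map_one, one_mul]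
    exact kmap_section π σ hσ s x
  · -- bijectivity
    intro x y t
    set b : E := (t : E) * σ y with hb
    have hπb : π b = y := pi_mem_mul_sec π σ hσ t y
    set z : G := f₁ (x * y⁻¹) * y with hz
    refine Function.bijective_iff_has_inverse.mpr
      ⟨fun u => kmap π σ hσ (f.symm ((u : E) * σ z * b⁻¹) * b), ?_, ?_⟩
    · intro s
      have hπQ : π (f ((s : E) * σ x * b⁻¹) * b) = z := by
        rw [hπq, pi_mem_mul_sec π σ hσ s x, hπb]
      have h1 : (α x y s t : E) = f ((s : E) * σ x * b⁻¹) * b * (σ z)⁻¹ := by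
        rw [hα]
        exact kmap_coe' π σ hσ hπQ
      have h2 : (α x y s t : E) * σ z * b⁻¹ = f ((s : E) * σ x * b⁻¹) := by
        rw [h1]; group
      simp only [h2, f.symm_apply_apply]
      have h3 : (s : E) * σ x * b⁻¹ * b = (s : E) * σ x := by group
      rw [h3]
      exact kmap_section π σ hσ s x
    · intro u
      set W : E := f.symm ((u : E) * σ z * b⁻¹) with hW
      have hπW : π W = x * y⁻¹ := by
        rw [hW, hπsymm]
        have : π ((u : E) * σ z * b⁻¹) = f₁ (x * y⁻¹) := by
          simp [map_mul, MonoidHom.mem_ker.mp u.2, hσ, hπb, hz]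
        rw [this, f₁.symm_apply_apply]
      have hπWb : π (W * b) = x := by
        rw [map_mul, hπW, hπb]; group
      have hcoe : (kmap π σ hσ (W * b) : E) * σ x = W * b := by
        have := kmap_mul_sec π σ hσ (W * b)
        rwa [hπWb] at this
      rw [hα]
      simp only [← hW, ← hb, hcoe]
      have h4 : W * b * b⁻¹ = W := by group
      rw [h4, hW, f.apply_symm_apply]
      have h5 : (u : E) * σ z * b⁻¹ * b = (u : E) * σ z := by group
      rw [h5]
      exact kmap_section π σ hσ u z
  · -- cocycle condition
    intro x y z s t u
    set a : E := (s : E) * σ x with ha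
    set b : E := (t : E) * σ y with hb
    set c : E := (u : E) * σ z with hc
    have hπa : π a = x := pi_mem_mul_sec π σ hσ s x
    have hπb : π b = y := pi_mem_mul_sec π σ hσ t y
    have hπc : π c = z := pi_mem_mul_sec π σ hσ u z
    have hks : kmap π σ hσ a = s := kmap_section π σ hσ s x
    have hkt : kmap π σ hσ b = t := kmap_section π σ hσ t y
    have hku : kmap π σ hσ c = u := kmap_section π σ hσ u z
    have e1 : α x y s t = kmap π σ hσ (f (a * b⁻¹) * b) := by
      rw [← hπa, ← hπb, ← hks, ← hkt] at *
      exact hkey a b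
    have e2 : α x z s u = kmap π σ hσ (f (a * c⁻¹) * c) := by
      rw [← hπa, ← hπc, ← hks, ← hku] at *
      exact hkey a c
    have e3 : α y z t u = kmap π σ hσ (f (b * c⁻¹) * c) := by
      rw [← hπb, ← hπc, ← hkt, ← hku] at *
      exact hkey b c
    have eL : α (f₁ (x * y⁻¹) * y) z (α x y s t) u =
        kmap π σ hσ (f ((f (a * b⁻¹) * b) * c⁻¹) * c) := by
      have := hkey (f (a * b⁻¹) * b) c
      rw [hπq a b, hπa, hπb, hπc, hku] at this
      rw [e1, this]
    have eR : α (f₁ (x * z⁻¹) * z) (f₁ (y * z⁻¹) * z) (α x z s u) (α y z t u) =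
        kmap π σ hσ (f ((f (a * c⁻¹) * c) * (f (b * c⁻¹) * c)⁻¹) * (f (b * c⁻¹) * c)) := by
      have := hkey (f (a * c⁻¹) * c) (f (b * c⁻¹) * c)
      rw [hπq a c, hπq b c, hπa, hπb, hπc] at this
      rw [e2, e3, this]
    rw [eL, eR]
    congr 1
    -- self-distributivity in Alex_f(E)
    simp only [mul_inv_rev, map_mul, map_inv]
    group
  · -- the quandle isomorphism
    refine ⟨fun e => (π e, kmap π σ hσ e), ?_, ?_⟩
    · refine Function.bijective_iff_has_inverse.mpr
        ⟨fun p => (p.2 : E) * σ p.1, ?_, ?_⟩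
      · intro e
        exact kmap_mul_sec π σ hσ e
      · intro p
        ext
        · exact pi_mem_mul_sec π σ hσ p.2 p.1
        · exact congrArg Subtype.val (kmap_section π σ hσ p.2 p.1)
    · intro a b
      have h1 : π (f (a * b⁻¹) * b) = f₁ (π a * (π b)⁻¹) * π b := hπq a b
      have h2 := hkey a b
      exact Prod.ext h1 h2.symm
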